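/- Let n, p, q, m be positive integers, A ∈ ℝ^{n×n}, B ∈ ℝ^{n×q}, C ∈ ℝ^{p×n}, and let Σ ∈ ℝ^{n×n}, Q ∈ ℝ^{n×n}, R ∈ ℝ^{p×p} be positive definite matrices. For data s̄ ∈ ℝ^n, z = (z₁,…,z_m) ∈ (ℝ^p)^m, u = (u₁,…,u_m) ∈ (ℝ^q)^m, define the MHE cost on trajectories x̂ = (x̂₀,…,x̂_m) ∈ (ℝ^n)^{m+1} by L(x̂; z, u, s̄) = (x̂₀ − s̄)ᵀ Σ⁻¹ (x̂₀ − s̄) + Σ_{k=1}^m (z_k − C x̂_k)ᵀ R⁻¹ (z_k − C x̂_k) + Σ_{k=1}^m (x̂_k − A x̂_{k−1} − B u_k)ᵀ Q⁻¹ (x̂_k − A x̂_{k−1} − B u_k). Then for every (z, u, s̄) the cost L(·; z, u, s̄) has a unique minimizer x̂*(z, u, s̄) over (ℝ^n)^{m+1}, and the map (z, u, s̄) ↦ x̂*(z, u, s̄) is linear (hence each output prediction C x̂*_m is linear in (z, u, s̄)). -/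

import Mathlib

open Matrix

section MHEAux

variable {n p q m : ℕ}

/-- quadratic form term positivity helpers -/
theorem dot_mulVec_nonneg {k : ℕ} {S : Matrix (Fin k) (Fin k) ℝ} (hS : S.PosSemidef)
    (x : Fin k → ℝ) : 0 ≤ x ⬝ᵥ S *ᵥ x := by
  have h := hS.dotProduct_mulVec_nonneg x
  simpa [star_trivial] using h

theorem dot_mulVec_pos {k : ℕ} {S : Matrix (Fin k) (Fin k) ℝ} (hS : S.PosDef)
    {x : Fin k → ℝ} (hx : x ≠ 0) : 0 < x ⬝ᵥ S *ᵥ x := by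
  have h := hS.dotProduct_mulVec_pos hx
  simpa [star_trivial] using h

theorem dot_mulVec_symm {k : ℕ} {S : Matrix (Fin k) (Fin k) ℝ} (hS : Sᵀ = S)
    (a b : Fin k → ℝ) : a ⬝ᵥ S *ᵥ b = b ⬝ᵥ S *ᵥ a := by
  rw [Matrix.dotProduct_mulVec, ← Matrix.mulVec_transpose, hS, dotProduct_comm]

theorem posdef_transpose_eq {k : ℕ} {S : Matrix (Fin k) (Fin k) ℝ} (hS : S.PosDef) :
    Sᵀ = S := by
  have h := hS.1
  rw [Matrix.IsHermitian] at h
  simpa using h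

/-- The weight bilinear form on the residual space. -/
noncomputable def mheBilin (S : Matrix (Fin n) (Fin n) ℝ) (Ry : Matrix (Fin p) (Fin p) ℝ)
    (Qw : Matrix (Fin n) (Fin n) ℝ) :
    LinearMap.BilinForm ℝ ((Fin n → ℝ) × (Fin m → Fin p → ℝ) × (Fin m → Fin n → ℝ)) :=
  LinearMap.mk₂ ℝ
    (fun w w' => w.1 ⬝ᵥ S *ᵥ w'.1 + ∑ j : Fin m, w.2.1 j ⬝ᵥ Ry *ᵥ w'.2.1 j
      + ∑ j : Fin m, w.2.2 j ⬝ᵥ Qw *ᵥ w'.2.2 j)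
    (by
      intro a b c
      simp only [Prod.fst_add, Prod.snd_add, Pi.add_apply, add_dotProduct,
        Finset.sum_add_distrib]
      ring)
    (by
      intro r a b
      simp only [Prod.smul_fst, Prod.smul_snd, Pi.smul_apply, smul_dotProduct,
        ← Finset.mul_sum, smul_eq_mul]
      ring)
    (by
      intro a b c
      simp only [Prod.fst_add, Prod.snd_add, Pi.add_apply, Matrix.mulVec_add,
        dotProduct_add, Finset.sum_add_distrib]
      ring)
    (by
      intro r a b
      simp only [Prod.smul_fst, Prod.smul_snd, Pi.smul_apply, Matrix.mulVec_smul,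
        dotProduct_smul, ← Finset.mul_sum, smul_eq_mul]
      ring)

@[simp] theorem mheBilin_apply (S : Matrix (Fin n) (Fin n) ℝ) (Ry : Matrix (Fin p) (Fin p) ℝ)
    (Qw : Matrix (Fin n) (Fin n) ℝ)
    (w w' : (Fin n → ℝ) × (Fin m → Fin p → ℝ) × (Fin m → Fin n → ℝ)) :
    mheBilin S Ry Qw w w' = w.1 ⬝ᵥ S *ᵥ w'.1 + ∑ j : Fin m, w.2.1 j ⬝ᵥ Ry *ᵥ w'.2.1 j
      + ∑ j : Fin m, w.2.2 j ⬝ᵥ Qw *ᵥ w'.2.2 j := rfl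

/-- The trajectory-to-residual linear map. -/
def mheM (A : Matrix (Fin n) (Fin n) ℝ) (C : Matrix (Fin p) (Fin n) ℝ) :
    (Fin (m + 1) → Fin n → ℝ) →ₗ[ℝ] (Fin n → ℝ) × (Fin m → Fin p → ℝ) × (Fin m → Fin n → ℝ) where
  toFun x := (x 0, fun j => -(C *ᵥ x j.succ), fun j => x j.succ - A *ᵥ x j.castSucc)
  map_add' x y := by
    refine Prod.ext ?_ (Prod.ext ?_ ?_) <;> funext j <;>
      simp [Matrix.mulVec_add, Pi.add_apply] <;> abel
  map_smul' r x := by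
    refine Prod.ext ?_ (Prod.ext ?_ ?_) <;> funext j <;>
      simp [Matrix.mulVec_smul, Pi.smul_apply, smul_sub]

@[simp] theorem mheM_apply (A : Matrix (Fin n) (Fin n) ℝ) (C : Matrix (Fin p) (Fin n) ℝ)
    (x : Fin (m + 1) → Fin n → ℝ) :
    mheM A C x = (x 0, fun j : Fin m => -(C *ᵥ x j.succ),
      fun j : Fin m => x j.succ - A *ᵥ x j.castSucc) := rfl

/-- The data-to-residual linear map. -/
def mheN (B : Matrix (Fin n) (Fin q) ℝ) :
    ((Fin m → Fin p → ℝ) × (Fin m → Fin q → ℝ) × (Fin n → ℝ)) →ₗ[ℝ]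
      (Fin n → ℝ) × (Fin m → Fin p → ℝ) × (Fin m → Fin n → ℝ) where
  toFun d := (-d.2.2, fun j => d.1 j, fun j => -(B *ᵥ d.2.1 j))
  map_add' x y := by
    refine Prod.ext ?_ (Prod.ext ?_ ?_) <;> funext j <;>
      simp [Matrix.mulVec_add, Pi.add_apply] <;> abel
  map_smul' r x := by
    refine Prod.ext ?_ (Prod.ext ?_ ?_) <;> funext j <;>
      simp [Matrix.mulVec_smul, Pi.smul_apply]

@[simp] theorem mheN_apply (B : Matrix (Fin n) (Fin q) ℝ)
    (d : (Fin m → Fin p → ℝ) × (Fin m → Fin q → ℝ) × (Fin n → ℝ)) :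
    mheN (m := m) (p := p) B d
      = (-d.2.2, fun j : Fin m => d.1 j, fun j : Fin m => -(B *ᵥ d.2.1 j)) := rfl

end MHEAux

/-- Abstract quadratic minimization: for a symmetric positive definite bilinear form `Bf`
on `W`, an injective linear `M : X →ₗ W` and any linear `N : D →ₗ W`, the map
`x ↦ Bf (M x + N d) (M x + N d)` has a unique minimizer depending linearly on `d`. -/
theorem quad_min_aux {D X W : Type*} [AddCommGroup D] [Module ℝ D]
    [AddCommGroup X] [Module ℝ X] [FiniteDimensional ℝ X]
    [AddCommGroup W] [Module ℝ W]
    (Bf : LinearMap.BilinForm ℝ W)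
    (hsymm : ∀ w w', Bf w w' = Bf w' w)
    (hpos : ∀ w, w ≠ 0 → 0 < Bf w w)
    (M : X →ₗ[ℝ] W) (hM : Function.Injective M) (N : D →ₗ[ℝ] W) :
    ∃ T : D →ₗ[ℝ] X, ∀ d,
      (∀ x, Bf (M (T d) + N d) (M (T d) + N d) ≤ Bf (M x + N d) (M x + N d)) ∧
      ∀ x, Bf (M x + N d) (M x + N d) ≤ Bf (M (T d) + N d) (M (T d) + N d) → x = T d := by
  set G : LinearMap.BilinForm ℝ X := Bf.compl₁₂ M M with hGdef
  have hGapp : ∀ x y, G x y = Bf (M x) (M y) := fun x y => rfl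
  have hGnd : G.Nondegenerate := by
    suffices hsep : ∀ x, (∀ y, G x y = 0) → x = 0 from
      ⟨hsep, fun y hy => hsep y (fun x => by rw [hGapp, hsymm, ← hGapp]; exact hy x)⟩
    intro x hx
    by_contra hx0
    have h1 : M x ≠ 0 := fun h => hx0 (hM (by simpa using h))
    have h2 := hpos (M x) h1
    have h3 := hx x
    rw [hGapp] at h3
    linarith
  let F : D →ₗ[ℝ] Module.Dual ℝ X := -((Bf.compl₂ M).comp N)
  refine ⟨(G.toDual hGnd).symm.toLinearMap ∘ₗ F, fun d => ?_⟩
  set T : D →ₗ[ℝ] X := (G.toDual hGnd).symm.toLinearMap ∘ₗ F with hTdef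
  have hnormal : ∀ x, G (T d) x = - Bf (N d) (M x) := by
    intro x
    have hT : T d = (G.toDual hGnd).symm (F d) := rfl
    have h := LinearMap.BilinForm.apply_toDual_symm_apply (B := G) (hB := hGnd) (F d) x
    rw [← hT] at h
    rw [h]
    simp [F]
  have hcross : ∀ x, Bf (M x) (M (T d) + N d) = 0 := by
    intro x
    have h1 : Bf (M x) (M (T d)) = - Bf (M x) (N d) := by
      rw [hsymm, ← hGapp, hnormal, hsymm]
    rw [map_add, h1]
    ring
  have key : ∀ x, Bf (M x + N d) (M x + N d)
      = Bf (M (T d) + N d) (M (T d) + N d) + Bf (M (x - T d)) (M (x - T d)) := by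
    intro x
    have hx : M x + N d = (M (T d) + N d) + M (x - T d) := by
      rw [map_sub]; abel
    have h1 : Bf (M (x - T d)) (M (T d) + N d) = 0 := hcross (x - T d)
    have h2 : Bf (M (T d) + N d) (M (x - T d)) = 0 := by rw [hsymm]; exact h1
    rw [hx]
    simp only [map_add, LinearMap.add_apply] at h1 h2 ⊢
    linarith
  have hnn : ∀ e : X, 0 ≤ Bf (M e) (M e) := by
    intro e
    by_cases he : M e = 0
    · simp [he]
    · exact le_of_lt (hpos _ he)
  constructor
  · intro x
    rw [key x]
    have := hnn (x - T d)
    linarith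
  · intro x hle
    rw [key x] at hle
    have h0 : Bf (M (x - T d)) (M (x - T d)) ≤ 0 := by linarith
    have hMe : M (x - T d) = 0 := by
      by_contra h
      exact absurd h0 (not_le.mpr (hpos _ h))
    have : x - T d = 0 := hM (by simpa using hMe)
    exact sub_eq_zero.mp this

/-- For a linear time-invariant model with positive definite weights, for every data
`(z, u, s̄)` the MHE cost has a unique minimizer over trajectories, and the minimizer
depends linearly on the data `(z, u, s̄)` (hence so does the output prediction `C x̂*ₘ`). -/
theorem mhe_unique_minimizer_linear_in_data
    {n p q m : ℕ} (hn : 0 < n) (hp : 0 < p) (hq : 0 < q) (hm : 0 < m)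
    (A : Matrix (Fin n) (Fin n) ℝ) (B : Matrix (Fin n) (Fin q) ℝ)
    (C : Matrix (Fin p) (Fin n) ℝ)
    (Sig Q : Matrix (Fin n) (Fin n) ℝ) (R : Matrix (Fin p) (Fin p) ℝ)
    (hSig : Sig.PosDef) (hQ : Q.PosDef) (hR : R.PosDef) :
    let L : (Fin m → Fin p → ℝ) × (Fin m → Fin q → ℝ) × (Fin n → ℝ) →
        (Fin (m + 1) → Fin n → ℝ) → ℝ := fun zus xs =>
      (xs 0 - zus.2.2) ⬝ᵥ Sig⁻¹.mulVec (xs 0 - zus.2.2)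
      + ∑ j : Fin m, (zus.1 j - C.mulVec (xs j.succ)) ⬝ᵥ
          R⁻¹.mulVec (zus.1 j - C.mulVec (xs j.succ))
      + ∑ j : Fin m, (xs j.succ - A.mulVec (xs j.castSucc) - B.mulVec (zus.2.1 j)) ⬝ᵥ
          Q⁻¹.mulVec (xs j.succ - A.mulVec (xs j.castSucc) - B.mulVec (zus.2.1 j))
    ∃ T : ((Fin m → Fin p → ℝ) × (Fin m → Fin q → ℝ) × (Fin n → ℝ)) →ₗ[ℝ]
        (Fin (m + 1) → Fin n → ℝ),
      ∀ zus, (∀ xs, L zus (T zus) ≤ L zus xs) ∧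
        ∀ xs, L zus xs ≤ L zus (T zus) → xs = T zus := by
  intro L
  have hSig' : (Sig⁻¹).PosDef := hSig.inv
  have hQ' : (Q⁻¹).PosDef := hQ.inv
  have hR' : (R⁻¹).PosDef := hR.inv
  set Bil := mheBilin (m := m) Sig⁻¹ R⁻¹ Q⁻¹ with hBil
  have hsymm : ∀ w w', Bil w w' = Bil w' w := by
    intro w w'
    rw [hBil, mheBilin_apply, mheBilin_apply,
      dot_mulVec_symm (posdef_transpose_eq hSig') w.1 w'.1,
      Finset.sum_congr rfl
        (fun j _ => dot_mulVec_symm (posdef_transpose_eq hR') (w.2.1 j) (w'.2.1 j)),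
      Finset.sum_congr rfl
        (fun j _ => dot_mulVec_symm (posdef_transpose_eq hQ') (w.2.2 j) (w'.2.2 j))]
  have hpos : ∀ w, w ≠ 0 → 0 < Bil w w := by
    rintro ⟨w1, w2, w3⟩ hw
    simp only [ne_eq, Prod.mk_eq_zero, not_and_or] at hw
    have ha : 0 ≤ w1 ⬝ᵥ Sig⁻¹ *ᵥ w1 := dot_mulVec_nonneg hSig'.posSemidef _
    have hb : ∀ j ∈ Finset.univ, 0 ≤ w2 j ⬝ᵥ R⁻¹ *ᵥ w2 j :=
      fun j _ => dot_mulVec_nonneg hR'.posSemidef _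
    have hc : ∀ j ∈ Finset.univ, 0 ≤ w3 j ⬝ᵥ Q⁻¹ *ᵥ w3 j :=
      fun j _ => dot_mulVec_nonneg hQ'.posSemidef _
    have hb' : 0 ≤ ∑ j : Fin m, w2 j ⬝ᵥ R⁻¹ *ᵥ w2 j := Finset.sum_nonneg hb
    have hc' : 0 ≤ ∑ j : Fin m, w3 j ⬝ᵥ Q⁻¹ *ᵥ w3 j := Finset.sum_nonneg hc
    rw [hBil, mheBilin_apply]
    rcases hw with h | h | h
    · have := dot_mulVec_pos hSig' h
      linarith
    · obtain ⟨j, hj⟩ := Function.ne_iff.mp h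
      have hp2 : 0 < ∑ j : Fin m, w2 j ⬝ᵥ R⁻¹ *ᵥ w2 j :=
        Finset.sum_pos' hb ⟨j, Finset.mem_univ j, dot_mulVec_pos hR' hj⟩
      linarith
    · obtain ⟨j, hj⟩ := Function.ne_iff.mp h
      have hp3 : 0 < ∑ j : Fin m, w3 j ⬝ᵥ Q⁻¹ *ᵥ w3 j :=
        Finset.sum_pos' hc ⟨j, Finset.mem_univ j, dot_mulVec_pos hQ' hj⟩
      linarith
  have hMinj : Function.Injective (mheM (m := m) A C) := by
    have hker : ∀ x, mheM (m := m) A C x = 0 → x = 0 := by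
      intro x hx
      rw [mheM_apply, Prod.mk_eq_zero, Prod.mk_eq_zero] at hx
      obtain ⟨h0, _, hw⟩ := hx
      have hall : ∀ i : Fin (m + 1), x i = 0 := by
        intro i
        induction i using Fin.induction with
        | zero => exact h0
        | succ i ih =>
          have hstep : x i.succ - A *ᵥ x i.castSucc = 0 := congrFun hw i
          rw [ih, Matrix.mulVec_zero, sub_zero] at hstep
          exact hstep
      exact funext hall
    intro a b hab
    have := hker (a - b) (by rw [map_sub, hab, sub_self])
    exact sub_eq_zero.mp this
  obtain ⟨T, hT⟩ := quad_min_aux Bil hsymm hpos (mheM A C) hMinj (mheN B)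
  refine ⟨T, fun zus => ?_⟩
  have hL : ∀ xs, L zus xs
      = Bil (mheM A C xs + mheN B zus) (mheM A C xs + mheN B zus) := by
    intro xs
    have hw : mheM (m := m) A C xs + mheN B zus
        = (xs 0 - zus.2.2, fun j : Fin m => zus.1 j - C *ᵥ xs j.succ,
           fun j : Fin m => xs j.succ - A *ᵥ xs j.castSucc - B *ᵥ zus.2.1 j) := by
      simp only [mheM_apply, mheN_apply, Prod.mk_add_mk, Prod.mk.injEq]
      refine ⟨?_, ?_, ?_⟩
      · rw [sub_eq_add_neg]
      · funext j
        simp [Pi.add_apply, neg_add_eq_sub]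
      · funext j
        simp [Pi.add_apply, sub_eq_add_neg]
    rw [hw, hBil, mheBilin_apply]
  exact ⟨fun xs => by rw [hL, hL]; exact (hT zus).1 xs,
    fun xs hle => (hT zus).2 xs (by rw [← hL, ← hL]; exact hle)⟩
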